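/- The p-basic derivation ∂_p, defined by (∂_p f)(n) = f(np)·v_p(np), is a derivation of the ring of arithmetic functions under Dirichlet convolution, and its kernel consists exactly of the arithmetic functions f such that f vanishes on all multiples of p (equivalently, p does not divide any element of the support of f). -/

import Mathlib

open ArithmeticFunction
open scoped Classical

/-- The embedding of `ℂ` into the Dirichlet ring of arithmetic functions,
sending `c` to the function with value `c` at `1` and `0` elsewhere. -/
noncomputable def CC : ℂ →+* ArithmeticFunction ℂ where
  toFun c := ⟨fun n => if n = 1 then c else 0, by simp⟩
  map_zero' := by ext n; simp
  map_one' := by ext n; simp [ArithmeticFunction.one_apply]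
  map_add' a b := by ext n; erw [ArithmeticFunction.add_apply]; by_cases h : n = 1 <;> simp [h]
  map_mul' a b := by
    ext n
    erw [ArithmeticFunction.mul_apply]
    by_cases h : n = 1
    · subst h
      rw [show Nat.divisorsAntidiagonal 1 = {(1,1)} from rfl]
      simp
    · rw [Finset.sum_eq_zero]
      · simp [h]
      · rintro ⟨d, e⟩ hde
        rw [Nat.mem_divisorsAntidiagonal] at hde
        rcases Decidable.eq_or_ne d 1 with hd | hd
        · have : e ≠ 1 := by rintro rfl; exact h (by simp [← hde.1, hd])
          simp [this]
        · simp [hd]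

/-- The order `v f` of an arithmetic function: the least element of the support
(`sInf` of the empty set is `0` for `f = 0`; that case is always excluded by hypotheses). -/
noncomputable def ordN (f : ArithmeticFunction ℂ) : ℕ := sInf {n : ℕ | f n ≠ 0}

/-- The order as an extended natural number, `⊤` for `f = 0`. -/
noncomputable def ordE (f : ArithmeticFunction ℂ) : ℕ∞ :=
  sInf ((fun n : ℕ => (n : ℕ∞)) '' {n : ℕ | f n ≠ 0})

/-- The norm `‖f‖ = 1/v(f)`, with `1/∞ = 0`. -/
noncomputable def nrm (f : ArithmeticFunction ℂ) : ℝ :=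
  if f = 0 then 0 else 1 / (ordN f : ℝ)

/-- Extension of an arithmetic function to `ℝ`, vanishing off `ℕ`. -/
noncomputable def extR (f : ArithmeticFunction ℂ) (x : ℝ) : ℂ :=
  if h : ∃ n : ℕ, (n : ℝ) = x then f h.choose else 0

/-- The exponential map `Exp f = exp(f 1) * ∑ (f - f 1)^k / k!` of the Dirichlet ring.
Since `(f - f 1)^k` has order `≥ 2^k`, the value of the infinite series at `n` equals the
value of the partial sum up to `k = n`. -/
noncomputable def ExpA (f : ArithmeticFunction ℂ) : ArithmeticFunction ℂ :=
  ⟨fun n => Complex.exp (f 1) *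
      ((∑ k ∈ Finset.range (n + 1),
        CC ((Nat.factorial k : ℂ)⁻¹) * (f - CC (f 1)) ^ k) n), by simp⟩

/-- The `p`-basic derivation `(∂_p f) n = v_p (n p) • f (n p)`. -/
noncomputable def DP (p : ℕ) (f : ArithmeticFunction ℂ) : ArithmeticFunction ℂ :=
  ⟨fun n => (padicValNat p (n * p) : ℂ) * f (n * p), by simp⟩

/-- The log-derivation `(∂_L f) n = log n * f n`. -/
noncomputable def DL (f : ArithmeticFunction ℂ) : ArithmeticFunction ℂ :=
  ⟨fun n => (Real.log n : ℂ) * f n, by simp⟩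

/-- The pointwise multiplication operator `𝔪_g`. -/
noncomputable def MG (g f : ArithmeticFunction ℂ) : ArithmeticFunction ℂ :=
  ⟨fun n => g n * f n, by simp⟩

/-- Integer powers `𝔪_g^i` of the pointwise multiplication operator:
`(𝔪_g^i f) n = (g n)^i * f n`. -/
noncomputable def MGi (g : ArithmeticFunction ℂ) (i : ℤ) (f : ArithmeticFunction ℂ) :
    ArithmeticFunction ℂ := ⟨fun n => g n ^ i * f n, by simp⟩

/-- `D` is a (ℂ-linear) derivation of the ring of arithmetic functions
under Dirichlet convolution. -/
def IsDerivationA (D : ArithmeticFunction ℂ → ArithmeticFunction ℂ) : Prop :=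
  (∀ f g, D (f + g) = D f + D g) ∧
  (∀ (c : ℂ) (f), D (CC c * f) = CC c * D f) ∧
  (∀ f g, D (f * g) = D f * g + f * D g)

/-- Convergence of a sequence of arithmetic functions in the norm topology. -/
def TendstoA (s : ℕ → ArithmeticFunction ℂ) (l : ArithmeticFunction ℂ) : Prop :=
  Filter.Tendsto (fun m => nrm (s m - l)) Filter.atTop (nhds 0)

/-- (Sequential) continuity of a map in the norm topology, which for this
ultrametric is equivalent to continuity. -/
def ContinuousA (D : ArithmeticFunction ℂ → ArithmeticFunction ℂ) : Prop :=
  ∀ (s : ℕ → ArithmeticFunction ℂ) (l), TendstoA s l → TendstoA (fun m => D (s m)) (D l)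

/-- The indicator function `e_m` of the singleton `{m}`. -/
noncomputable def En (m : ℕ) : ArithmeticFunction ℂ :=
  ⟨fun n => if 0 < n ∧ n = m then 1 else 0, by simp⟩

/-- The constant one arithmetic function `𝟙`. -/
noncomputable def OneA : ArithmeticFunction ℂ := ⟨fun n => if n = 0 then 0 else 1, by simp⟩

/-- The ℂ-algebra structure of the ring of arithmetic functions, via `CC`. -/
noncomputable instance : Algebra ℂ (ArithmeticFunction ℂ) := CC.toAlgebra

lemma DP_apply (p : ℕ) (f : ArithmeticFunction ℂ) (n : ℕ) :
    DP p f n = (padicValNat p (n * p) : ℂ) * f (n * p) := rfl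

lemma CC_apply (c : ℂ) (n : ℕ) : CC c n = if n = 1 then c else 0 := rfl

lemma swap_sum (m : ℕ) (h : ℕ → ℕ → ℂ) :
    ∑ x ∈ m.divisorsAntidiagonal, h x.1 x.2 = ∑ x ∈ m.divisorsAntidiagonal, h x.2 x.1 := by
  refine Finset.sum_nbij' Prod.swap Prod.swap ?_ ?_ ?_ ?_ ?_ <;>
    simp only [Nat.mem_divisorsAntidiagonal, Prod.fst_swap, Prod.snd_swap, Prod.swap_swap]
  · rintro ⟨a, b⟩ ⟨h1, h2⟩; exact ⟨by rw [mul_comm]; exact h1, h2⟩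
  · rintro ⟨a, b⟩ ⟨h1, h2⟩; exact ⟨by rw [mul_comm]; exact h1, h2⟩
  · intro a _; trivial
  · intro a _; trivial
  · intro a _; trivial

lemma key (p n : ℕ) (hp : p.Prime) (hn : n ≠ 0) (F G : ℕ → ℂ) :
    ∑ x ∈ (n*p).divisorsAntidiagonal, (padicValNat p x.1 : ℂ) * (F x.1 * G x.2)
    = ∑ x ∈ n.divisorsAntidiagonal, (padicValNat p (x.1*p) : ℂ) * (F (x.1*p) * G x.2) := by
  rw [← Finset.sum_filter_add_sum_filter_not ((n*p).divisorsAntidiagonal) (fun x => p ∣ x.1)]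
  have h2 : ∑ x ∈ (n*p).divisorsAntidiagonal.filter (fun x => ¬ p ∣ x.1),
      (padicValNat p x.1 : ℂ) * (F x.1 * G x.2) = 0 := by
    apply Finset.sum_eq_zero
    intro x hx
    rw [Finset.mem_filter] at hx
    rw [padicValNat.eq_zero_of_not_dvd hx.2]
    simp
  rw [h2, add_zero]
  refine Finset.sum_nbij' (fun x => (x.1 / p, x.2)) (fun x => (x.1 * p, x.2)) ?_ ?_ ?_ ?_ ?_
  · rintro ⟨a, b⟩ hab
    rw [Finset.mem_filter, Nat.mem_divisorsAntidiagonal] at hab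
    obtain ⟨⟨h1, -⟩, k, rfl⟩ := hab
    rw [Nat.mem_divisorsAntidiagonal]
    refine ⟨?_, hn⟩
    simp only [Nat.mul_div_cancel_left k hp.pos]
    have : (k * b) * p = n * p := by rw [← h1]; ring
    exact Nat.eq_of_mul_eq_mul_right hp.pos this
  · rintro ⟨a, b⟩ hab
    rw [Nat.mem_divisorsAntidiagonal] at hab
    rw [Finset.mem_filter, Nat.mem_divisorsAntidiagonal]
    exact ⟨⟨by rw [← hab.1]; ring, mul_ne_zero hn hp.ne_zero⟩, ⟨a, mul_comm a p⟩⟩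
  · rintro ⟨a, b⟩ hab
    rw [Finset.mem_filter] at hab
    simp only [Nat.div_mul_cancel hab.2]
  · rintro ⟨a, b⟩ _
    simp only [Nat.mul_div_cancel _ hp.pos]
  · rintro ⟨a, b⟩ hab
    rw [Finset.mem_filter] at hab
    simp only [Nat.div_mul_cancel hab.2]

/-- The `p`-basic derivation `∂_p` is a derivation of the Dirichlet convolution ring,
and its kernel consists exactly of the functions vanishing on all multiples of `p`. -/
theorem stmt10 (p : ℕ) (hp : p.Prime) :
    IsDerivationA (DP p) ∧
    (∀ f : ArithmeticFunction ℂ, DP p f = 0 ↔ ∀ n : ℕ, p ∣ n → f n = 0) := by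
  haveI : Fact p.Prime := ⟨hp⟩
  constructor
  · refine ⟨?_, ?_, ?_⟩
    · intro f g
      ext n
      simp only [DP_apply, ArithmeticFunction.add_apply]
      ring
    · intro c f
      have hCCmul : ∀ (g : ArithmeticFunction ℂ) (n : ℕ), (CC c * g) n = c * g n := by
        intro g n
        rcases eq_or_ne n 0 with rfl | hn
        · simp [mul_apply]
        rw [mul_apply, Finset.sum_eq_single_of_mem (1, n)]
        · simp only [CC_apply]
          simp
        · rw [Nat.mem_divisorsAntidiagonal]
          exact ⟨one_mul n, hn⟩
        · rintro ⟨a, b⟩ hab hne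
          have ha : a ≠ 1 := by
            rintro rfl
            rw [Nat.mem_divisorsAntidiagonal] at hab
            exact hne (by rw [Prod.mk.injEq]; exact ⟨rfl, by rw [← hab.1, one_mul]⟩)
          simp only [CC_apply]
          simp [ha]
      ext n
      rw [DP_apply, hCCmul, hCCmul, DP_apply]
      ring
    · intro f g
      ext n
      rcases eq_or_ne n 0 with rfl | hn
      · simp [DP_apply]
      have hnp : n * p ≠ 0 := mul_ne_zero hn hp.ne_zero
      rw [ArithmeticFunction.add_apply, DP_apply, mul_apply, Finset.mul_sum]
      have step : ∀ x ∈ (n*p).divisorsAntidiagonal,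
          (padicValNat p (n*p) : ℂ) * (f x.1 * g x.2)
          = (padicValNat p x.1 : ℂ) * (f x.1 * g x.2)
            + (padicValNat p x.2 : ℂ) * (f x.1 * g x.2) := by
        rintro ⟨a, b⟩ hab
        rw [Nat.mem_divisorsAntidiagonal] at hab
        have ha : a ≠ 0 := fun h => hnp (by rw [← hab.1, h, zero_mul])
        have hb : b ≠ 0 := fun h => hnp (by rw [← hab.1, h, mul_zero])
        rw [← hab.1, padicValNat.mul ha hb]
        push_cast
        ring
      rw [Finset.sum_congr rfl step, Finset.sum_add_distrib]
      congr 1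
      · rw [key p n hp hn f g, mul_apply]
        apply Finset.sum_congr rfl
        intro x _
        rw [DP_apply]
        ring
      · rw [swap_sum (n*p) (fun a b => (padicValNat p b : ℂ) * (f a * g b))]
        have : ∑ x ∈ (n*p).divisorsAntidiagonal, (padicValNat p x.1 : ℂ) * (f x.2 * g x.1)
            = ∑ x ∈ (n*p).divisorsAntidiagonal, (padicValNat p x.1 : ℂ) * (g x.1 * f x.2) := by
          apply Finset.sum_congr rfl; intro x _; ring
        rw [this, key p n hp hn g f, mul_comm f (DP p g), mul_apply]
        apply Finset.sum_congr rfl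
        intro x _
        rw [DP_apply]
        ring
  · intro f
    constructor
    · intro h n hdvd
      rcases eq_or_ne n 0 with rfl | hn
      · exact f.map_zero
      obtain ⟨m, rfl⟩ := hdvd
      have hm : m ≠ 0 := fun h0 => hn (by rw [h0, mul_zero])
      have hev : DP p f m = 0 := by rw [h]; rfl
      rw [DP_apply] at hev
      have hv : padicValNat p (m * p) ≠ 0 := by
        intro h0
        rw [padicValNat.eq_zero_iff] at h0
        rcases h0 with h0 | h0 | h0
        · exact hp.ne_one h0
        · exact mul_ne_zero hm hp.ne_zero h0
        · exact h0 (dvd_mul_left p m)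
      have : (padicValNat p (m * p) : ℂ) ≠ 0 := Nat.cast_ne_zero.mpr hv
      rw [mul_comm p m]
      exact (mul_eq_zero.mp hev).resolve_left this
    · intro h
      ext n
      rw [DP_apply, h (n * p) (dvd_mul_left p n), mul_zero]
      rfl
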